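/- arXiv:0810.5044 — 4 statements merged into one kernel-verified Lean document; each statement's English description precedes it below -/
import Mathlib

section
/- Let B be a basket and p₂ an integer such that K³(B,1,p₂) > 0. Then for every integer m ≥ 2 one has P_{m+2}(B,1,p₂) − P_m(B,1,p₂) − p₂ > −1. In particular, if all the numbers P_k(B,1,p₂) are integers, then P_{m+2}(B,1,p₂) ≥ P_m(B,1,p₂) + p₂ for every m ≥ 2. -/
/-- A basket: a finite multiset of pairs `(b, r)` of positive integers with `2b ≤ r`. -/
def IsBasket (B : Multiset (ℕ × ℕ)) : Prop :=
  ∀ p ∈ B, 0 < p.1 ∧ 2 * p.1 ≤ p.2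

/-- Reid's Riemann–Roch volume `K³(B, χ, p₂)`. -/
def Kcube (B : Multiset (ℕ × ℕ)) (χ p₂ : ℤ) : ℚ :=
  2 * p₂ + 6 * χ - (B.map fun p => (p.1 : ℚ) * ((p.2 : ℚ) - (p.1 : ℚ)) / (p.2 : ℚ)).sum

/-- Reid's Riemann–Roch plurigenus `P_m(B, χ, p₂)` for `m ≥ 2`. -/
def Pm (B : Multiset (ℕ × ℕ)) (χ p₂ : ℤ) (m : ℕ) : ℚ :=
  (1 / 12 : ℚ) * (m : ℚ) * ((m : ℚ) - 1) * (2 * (m : ℚ) - 1) * Kcube B χ p₂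
    + (1 - 2 * (m : ℚ)) * (χ : ℚ)
    + (B.map fun p => ∑ j ∈ Finset.Icc 1 (m - 1),
        ((j * p.1 % p.2 : ℕ) : ℚ) * ((p.2 : ℚ) - ((j * p.1 % p.2 : ℕ) : ℚ))
          / (2 * (p.2 : ℚ))).sum

/-- The Miyaoka–Reid inequality for the pair `(B, χ)`:
`Σ_{(b,r)∈B} r − 24χ ≥ Σ_{(b,r)∈B} 1/r`. -/
def MiyaokaReid (B : Multiset (ℕ × ℕ)) (χ : ℤ) : Prop :=
  (B.map fun p => 1 / (p.2 : ℚ)).sum ≤ (B.map fun p => (p.2 : ℚ)).sum - 24 * χ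

/-- One-step packing: replace two elements `(b₁,r₁), (b₂,r₂)` by `(b₁+b₂, r₁+r₂)`. -/
def Pack (B B' : Multiset (ℕ × ℕ)) : Prop :=
  ∃ p q S, B = p ::ₘ q ::ₘ S ∧ B' = (p.1 + q.1, p.2 + q.2) ::ₘ S

/-- Normalization implementing the identification of a pair `(kb, kr)` (with
`gcd b r = 1`) with `k` copies of `(b, r)`. -/
def normalizeBasket (B : Multiset (ℕ × ℕ)) : Multiset (ℕ × ℕ) :=
  B.bind fun p => Multiset.replicate (Nat.gcd p.1 p.2)
    (p.1 / Nat.gcd p.1 p.2, p.2 / Nat.gcd p.1 p.2)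

/-- One step of packing, up to the identification. -/
def PackStep (B B' : Multiset (ℕ × ℕ)) : Prop :=
  ∃ C, Pack B C ∧ normalizeBasket C = B'

/-- `B` dominates `B'` (written `B ≽ B'`): `B'` is obtained from `B` by finitely many
one-step packings, up to the identification. -/
def Dominates (B B' : Multiset (ℕ × ℕ)) : Prop :=
  Relation.ReflTransGen PackStep (normalizeBasket B) (normalizeBasket B')

/-- The triple `(B, 1, p₂)` is admissible. -/
def Admissible (B : Multiset (ℕ × ℕ)) (p₂ : ℤ) : Prop :=
  IsBasket B ∧ 0 ≤ p₂ ∧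
  (∀ p ∈ B, Nat.gcd p.1 p.2 = 1) ∧
  0 < Kcube B 1 p₂ ∧
  (∀ m : ℕ, 2 ≤ m → ∃ n : ℕ, Pm B 1 p₂ m = (n : ℚ)) ∧
  (∀ m : ℕ, 2 ≤ m → Pm B 1 p₂ m + (p₂ : ℚ) ≤ Pm B 1 p₂ (m + 2)) ∧
  (∀ m n : ℕ, 2 ≤ m → 2 ≤ n → 1 ≤ Pm B 1 p₂ n → Pm B 1 p₂ m ≤ Pm B 1 p₂ (m + n))


/-- Subadditivity of `x ↦ (x % r) * (r - x % r)` (as rationals). -/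
lemma g_subadd (r a b : ℕ) (hr : 0 < r) :
    (((a + b) % r : ℕ) : ℚ) * ((r : ℚ) - (((a + b) % r : ℕ) : ℚ)) ≤
      ((a % r : ℕ) : ℚ) * ((r : ℚ) - ((a % r : ℕ) : ℚ)) +
      ((b % r : ℕ) : ℚ) * ((r : ℚ) - ((b % r : ℕ) : ℚ)) := by
  have ha : a % r < r := Nat.mod_lt _ hr
  have hb : b % r < r := Nat.mod_lt _ hr
  rw [Nat.add_mod]
  set a' := a % r with h1
  set b' := b % r with h2
  rcases lt_or_ge (a' + b') r with h | h
  · rw [Nat.mod_eq_of_lt h]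
    push_cast
    nlinarith [Nat.cast_nonneg (α := ℚ) a', Nat.cast_nonneg (α := ℚ) b']
  · have h3 : (a' + b') % r = a' + b' - r := by
      rw [Nat.mod_eq_sub_mod h, Nat.mod_eq_of_lt (by omega)]
    rw [h3]
    have h4 : ((a' + b' - r : ℕ) : ℚ) = (a' : ℚ) + (b' : ℚ) - (r : ℚ) := by
      push_cast [Nat.cast_sub h]; ring
    rw [h4]
    push_cast
    have c1 : (a' : ℚ) ≤ r := by exact_mod_cast ha.le
    have c2 : (b' : ℚ) ≤ r := by exact_mod_cast hb.le
    nlinarith [mul_nonneg (sub_nonneg.mpr c1) (sub_nonneg.mpr c2)]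

/-- Key residue inequality: `g(b) ≤ g(m·b) + g((m+1)·b)` where `g(x) = (x%r)(r−x%r)`. -/
lemma g_key (r b m : ℕ) (hr : 0 < r) :
    ((b % r : ℕ) : ℚ) * ((r : ℚ) - ((b % r : ℕ) : ℚ)) ≤
      ((m * b % r : ℕ) : ℚ) * ((r : ℚ) - ((m * b % r : ℕ) : ℚ)) +
      (((m + 1) * b % r : ℕ) : ℚ) * ((r : ℚ) - (((m + 1) * b % r : ℕ) : ℚ)) := by
  set c := r - m * b % r with hc
  have hmb : m * b % r < r := Nat.mod_lt _ hr
  have hmod : ((m + 1) * b + c) % r = b % r := by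
    have hd := Nat.div_add_mod (m * b) r
    have h1 : (m + 1) * b = m * b + b := by ring
    have h15 : r * (m * b / r + 1) = r * (m * b / r) + r := by ring
    have h2 : (m + 1) * b + c = b + r * (m * b / r + 1) := by omega
    rw [h2, Nat.add_mul_mod_self_left]
  have hcmod : ((c % r : ℕ) : ℚ) * ((r : ℚ) - ((c % r : ℕ) : ℚ)) =
      ((m * b % r : ℕ) : ℚ) * ((r : ℚ) - ((m * b % r : ℕ) : ℚ)) := by
    rcases Nat.eq_zero_or_pos (m * b % r) with h0 | hpos
    · have : c = r := by omega
      rw [this, h0, Nat.mod_self]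
    · have hlt : c < r := by omega
      rw [Nat.mod_eq_of_lt hlt]
      have : ((c : ℕ) : ℚ) = (r : ℚ) - ((m * b % r : ℕ) : ℚ) := by
        rw [hc]; push_cast [Nat.cast_sub hmb.le]; ring
      rw [this]; ring
  calc ((b % r : ℕ) : ℚ) * ((r : ℚ) - ((b % r : ℕ) : ℚ))
      = ((((m + 1) * b + c) % r : ℕ) : ℚ) * ((r : ℚ) - ((((m + 1) * b + c) % r : ℕ) : ℚ)) := by
        rw [hmod]
    _ ≤ _ := by
        have := g_subadd r ((m + 1) * b) c hr
        rw [hcmod] at this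
        linarith

/-- Per-element inequality matching the `Pm`/`Kcube` summands. -/
lemma pair_key (m : ℕ) (p : ℕ × ℕ) (hp : 0 < p.1 ∧ 2 * p.1 ≤ p.2) :
    (p.1 : ℚ) * ((p.2 : ℚ) - (p.1 : ℚ)) / (p.2 : ℚ) ≤
      2 * (((m * p.1 % p.2 : ℕ) : ℚ) * ((p.2 : ℚ) - ((m * p.1 % p.2 : ℕ) : ℚ)) / (2 * (p.2 : ℚ))
        + (((m + 1) * p.1 % p.2 : ℕ) : ℚ) * ((p.2 : ℚ) - (((m + 1) * p.1 % p.2 : ℕ) : ℚ))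
          / (2 * (p.2 : ℚ))) := by
  obtain ⟨b, r⟩ := p
  obtain ⟨hb, hbr⟩ := hp
  simp only at *
  have hr : 0 < r := by omega
  have hbmod : b % r = b := Nat.mod_eq_of_lt (by omega)
  have hkey := g_key r b m hr
  rw [hbmod] at hkey
  have hrq : (0:ℚ) < (r:ℚ) := by exact_mod_cast hr
  rw [← add_div, mul_div_assoc']
  rw [div_le_div_iff₀ hrq (by positivity)]
  nlinarith [hkey, hrq.le]

/-- If `K³(B,1,p₂) > 0` then `P_{m+2} − P_m − p₂ > −1` for all `m ≥ 2`; if moreover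
all the `P_k(B,1,p₂)` are integers, then `P_{m+2} ≥ P_m + p₂` for all `m ≥ 2`. -/
theorem Pm_add_two_ge (B : Multiset (ℕ × ℕ)) (p₂ : ℤ)
    (hB : IsBasket B) (hK : 0 < Kcube B 1 p₂) :
    (∀ m : ℕ, 2 ≤ m → Pm B 1 p₂ (m + 2) - Pm B 1 p₂ m - (p₂ : ℚ) > -1) ∧
    ((∀ k : ℕ, 2 ≤ k → ∃ n : ℤ, Pm B 1 p₂ k = (n : ℚ)) →
      ∀ m : ℕ, 2 ≤ m → Pm B 1 p₂ m + (p₂ : ℚ) ≤ Pm B 1 p₂ (m + 2)) := by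
  have main : ∀ m : ℕ, 2 ≤ m → Pm B 1 p₂ (m + 2) - Pm B 1 p₂ m - (p₂ : ℚ) > -1 := by
    intro m hm
    obtain ⟨k, rfl⟩ : ∃ k, m = k + 2 := ⟨m - 2, by omega⟩
    -- abbreviations
    set T0 : ℚ := (B.map fun p => (p.1 : ℚ) * ((p.2 : ℚ) - (p.1 : ℚ)) / (p.2 : ℚ)).sum with hT0
    set TT : ℚ := (B.map fun p =>
        (((k + 2) * p.1 % p.2 : ℕ) : ℚ) * ((p.2 : ℚ) - (((k + 2) * p.1 % p.2 : ℕ) : ℚ))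
          / (2 * (p.2 : ℚ))
        + (((k + 3) * p.1 % p.2 : ℕ) : ℚ) * ((p.2 : ℚ) - (((k + 3) * p.1 % p.2 : ℕ) : ℚ))
          / (2 * (p.2 : ℚ))).sum with hTT
    have hK' : 0 < 2 * (p₂ : ℚ) + 6 - T0 := by
      have : Kcube B 1 p₂ = 2 * (p₂ : ℚ) + 6 - T0 := by simp [Kcube, hT0]
      linarith [this ▸ hK]
    have hT : T0 ≤ 2 * TT := by
      rw [hTT, ← Multiset.sum_map_mul_left]
      exact Multiset.sum_map_le_sum_map _ _ fun p hp => pair_key (k + 2) p (hB p hp)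
    have hid : Pm B 1 p₂ (k + 2 + 2) - Pm B 1 p₂ (k + 2) - (p₂ : ℚ) =
        ((k : ℚ) ^ 2 + 5 * k + 6) * (2 * (p₂ : ℚ) + 6 - T0) - 1 + (TT - T0 / 2) := by
      have hc : Kcube B 1 p₂ = 2 * (p₂ : ℚ) + 6 - T0 := by simp [Kcube, hT0]
      have h1 : k + 2 + 2 - 1 = k + 3 := rfl
      have h2 : k + 2 - 1 = k + 1 := rfl
      have hIcc : ∀ G : ℕ → ℚ, ∑ j ∈ Finset.Icc 1 (k + 3), G j =
          (∑ j ∈ Finset.Icc 1 (k + 1), G j) + (G (k + 2) + G (k + 3)) := by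
        intro G
        rw [show k + 3 = (k + 2) + 1 from rfl, Finset.sum_Icc_succ_top (by omega),
          show k + 2 = (k + 1) + 1 from rfl, Finset.sum_Icc_succ_top (by omega)]
        ring
      rw [Pm, Pm, hc, h1, h2]
      simp only [hIcc, Multiset.sum_map_add]
      rw [hTT, Multiset.sum_map_add]
      push_cast
      ring
    rw [hid]
    have hpos : (0 : ℚ) < ((k : ℚ) ^ 2 + 5 * k + 6) * (2 * (p₂ : ℚ) + 6 - T0) :=
      mul_pos (by positivity) hK'
    linarith
  refine ⟨main, fun hint m hm => ?_⟩
  obtain ⟨a, ha⟩ := hint (m + 2) (by omega)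
  obtain ⟨b, hb⟩ := hint m hm
  have h1 := main m hm
  rw [ha, hb] at h1 ⊢
  have h2 : (-1 : ℤ) < a - b - p₂ := by exact_mod_cast h1
  have h3 : b + p₂ ≤ a := by omega
  exact_mod_cast h3
end

section
/- Let (B,1,0) be an admissible triple with (P₃,P₄,P₅,P₆)(B,1,0) = (0,0,1,0). Then B dominates one of the five baskets {(9,22),(1,3)}, {(7,17),(3,8)}, {(5,12),(5,13)}, {(3,7),(7,18)}, {(1,2),(9,23)}. Consequently K³(B,1,0) ≥ 1/156 and P₁₀(B,1,0) ≥ 2. -/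

def cfun (p : ℕ × ℕ) : ℚ := (p.1 : ℚ) * ((p.2 : ℚ) - (p.1 : ℚ)) / (p.2 : ℚ)
def qterm (p : ℕ × ℕ) (j : ℕ) : ℚ :=
  ((j * p.1 % p.2 : ℕ) : ℚ) * ((p.2 : ℚ) - ((j * p.1 % p.2 : ℕ) : ℚ)) / (2 * (p.2 : ℚ))
def sfun (m : ℕ) (p : ℕ × ℕ) : ℚ := ∑ j ∈ Finset.Icc 1 (m - 1), qterm p j


lemma Pm_eq (B : Multiset (ℕ × ℕ)) (χ p₂ : ℤ) (m : ℕ) :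
    Pm B χ p₂ m = (1 / 12 : ℚ) * (m : ℚ) * ((m : ℚ) - 1) * (2 * (m : ℚ) - 1) * Kcube B χ p₂
      + (1 - 2 * (m : ℚ)) * (χ : ℚ) + (B.map (sfun m)).sum := rfl

lemma Kcube_eq (B : Multiset (ℕ × ℕ)) : Kcube B 1 0 = 6 - (B.map cfun).sum := by
  show (2 * (((0:ℤ)):ℚ)) + 6 * (((1:ℤ)):ℚ) - (B.map cfun).sum = 6 - (B.map cfun).sum
  norm_num

lemma sum_Icc_2 (f : ℕ → ℚ) : ∑ j ∈ Finset.Icc 1 2, f j = f 1 + f 2 := by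
  rw [Finset.sum_Icc_succ_top (by norm_num), Finset.Icc_self, Finset.sum_singleton]
lemma sum_Icc_3 (f : ℕ → ℚ) : ∑ j ∈ Finset.Icc 1 3, f j = f 1 + f 2 + f 3 := by
  rw [Finset.sum_Icc_succ_top (by norm_num), sum_Icc_2]
lemma sum_Icc_4 (f : ℕ → ℚ) : ∑ j ∈ Finset.Icc 1 4, f j = f 1 + f 2 + f 3 + f 4 := by
  rw [Finset.sum_Icc_succ_top (by norm_num), sum_Icc_3]
lemma sum_Icc_5 (f : ℕ → ℚ) : ∑ j ∈ Finset.Icc 1 5, f j = f 1 + f 2 + f 3 + f 4 + f 5 := by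
  rw [Finset.sum_Icc_succ_top (by norm_num), sum_Icc_4]

section terms

variable {b r : ℕ} (hb : 1 ≤ b) (h2 : 2 * b ≤ r)
include hb h2

lemma rq_ne : (r : ℚ) ≠ 0 := Nat.cast_ne_zero.mpr (by omega)

lemma t1 : qterm (b, r) 1 = cfun (b, r) / 2 := by
  have hr : (r:ℚ) ≠ 0 := rq_ne hb h2
  have h : 1 * b % r = b := by rw [one_mul]; exact Nat.mod_eq_of_lt (by omega)
  rw [qterm, cfun, h]; push_cast; ring

lemma t2 : qterm (b, r) 2 = 2 * cfun (b, r) - b := by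
  have hr : (r:ℚ) ≠ 0 := rq_ne hb h2
  rcases Nat.lt_or_ge (2 * b) r with h | h
  · have hm : 2 * b % r = 2 * b := Nat.mod_eq_of_lt h
    simp only [qterm, cfun, hm]; push_cast; field_simp; ring
  · have hrr : r = 2 * b := by omega
    subst hrr
    have hm : 2 * b % (2 * b) = 0 := Nat.mod_self _
    simp only [qterm, cfun, hm]; push_cast; field_simp; ring

lemma t3 : qterm (b, r) 3 = (9/2) * cfun (b, r) - 3 * b + ((3 * b - r : ℕ) : ℚ) := by
  have hr : (r:ℚ) ≠ 0 := rq_ne hb h2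
  rcases Nat.lt_or_ge (3 * b) r with h | h
  · have hm : 3 * b % r = 3 * b := Nat.mod_eq_of_lt h
    have hx : 3 * b - r = 0 := by omega
    simp only [qterm, cfun, hm, hx]; push_cast; field_simp; ring
  · have hm : 3 * b % r = 3 * b - r := by
      rw [Nat.mod_eq_sub_mod h, Nat.mod_eq_of_lt (by omega)]
    simp only [qterm, cfun, hm]
    rw [Nat.cast_sub h]; push_cast; field_simp; ring

lemma t4 : qterm (b, r) 4 = 8 * cfun (b, r) - 6 * b + ((4 * b - r : ℕ) : ℚ) := by
  have hr : (r:ℚ) ≠ 0 := rq_ne hb h2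
  rcases Nat.lt_or_ge (4 * b) r with h | h
  · have hm : 4 * b % r = 4 * b := Nat.mod_eq_of_lt h
    have hx : 4 * b - r = 0 := by omega
    simp only [qterm, cfun, hm, hx]; push_cast; field_simp; ring
  · rcases Nat.lt_or_ge (4 * b) (2 * r) with h' | h'
    · have hm : 4 * b % r = 4 * b - r := by
        rw [Nat.mod_eq_sub_mod h, Nat.mod_eq_of_lt (by omega)]
      simp only [qterm, cfun, hm]
      rw [Nat.cast_sub h]; push_cast; field_simp; ring
    · have hrr : r = 2 * b := by omega
      subst hrr
      have hm : 4 * b % (2 * b) = 0 := by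
        rw [show 4 * b = 2 * (2 * b) by ring]; exact Nat.mul_mod_left 2 (2 * b)
      have hx : (4 * b - 2 * b : ℕ) = 2 * b := by omega
      simp only [qterm, cfun, hm, hx]; push_cast; field_simp; ring

lemma t5 : qterm (b, r) 5 = (25/2) * cfun (b, r) - 10 * b
    + ((5 * b - r : ℕ) : ℚ) + ((5 * b - 2 * r : ℕ) : ℚ) := by
  have hr : (r:ℚ) ≠ 0 := rq_ne hb h2
  rcases Nat.lt_or_ge (5 * b) r with h | h
  · have hm : 5 * b % r = 5 * b := Nat.mod_eq_of_lt h
    have hx : 5 * b - r = 0 := by omega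
    have hw : 5 * b - 2 * r = 0 := by omega
    simp only [qterm, cfun, hm, hx, hw]; push_cast; field_simp; ring
  · rcases Nat.lt_or_ge (5 * b) (2 * r) with h' | h'
    · have hm : 5 * b % r = 5 * b - r := by
        rw [Nat.mod_eq_sub_mod h, Nat.mod_eq_of_lt (by omega)]
      have hw : 5 * b - 2 * r = 0 := by omega
      simp only [qterm, cfun, hm, hw]
      rw [Nat.cast_sub h]; push_cast; field_simp; ring
    · have hm : 5 * b % r = 5 * b - 2 * r := by
        rw [Nat.mod_eq_sub_mod h, Nat.mod_eq_sub_mod (by omega),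
          Nat.mod_eq_of_lt (by omega)]
        omega
      simp only [qterm, cfun, hm]
      rw [Nat.cast_sub (by omega), Nat.cast_sub h]; push_cast; field_simp; ring

end terms


section sfuns
variable {b r : ℕ} (hb : 1 ≤ b) (h2 : 2 * b ≤ r)
include hb h2

lemma sfun3 : sfun 3 (b, r) = (5/2) * cfun (b, r) - b := by
  rw [sfun, show (3:ℕ) - 1 = 2 from rfl, sum_Icc_2, t1 hb h2, t2 hb h2]; ring

lemma sfun4 : sfun 4 (b, r) = 7 * cfun (b, r) - 4 * b + ((3 * b - r : ℕ) : ℚ) := by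
  rw [sfun, show (4:ℕ) - 1 = 3 from rfl, sum_Icc_3, t1 hb h2, t2 hb h2, t3 hb h2]; ring

lemma sfun5 : sfun 5 (b, r) = 15 * cfun (b, r) - 10 * b
    + (((3 * b - r : ℕ) + (4 * b - r : ℕ) : ℕ) : ℚ) := by
  rw [sfun, show (5:ℕ) - 1 = 4 from rfl, sum_Icc_4, t1 hb h2, t2 hb h2, t3 hb h2, t4 hb h2]
  push_cast; ring

lemma sfun6 : sfun 6 (b, r) = (55/2) * cfun (b, r) - 20 * b
    + ((((3 * b - r : ℕ) + (4 * b - r : ℕ)) + ((5 * b - r : ℕ) + (5 * b - 2 * r : ℕ)) : ℕ) : ℚ) := by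
  rw [sfun, show (6:ℕ) - 1 = 5 from rfl, sum_Icc_5, t1 hb h2, t2 hb h2, t3 hb h2, t4 hb h2,
    t5 hb h2]
  push_cast; ring

end sfuns

section msetutil
variable {α : Type*}

lemma cast_sum_map (B : Multiset (ℕ × ℕ)) (f : ℕ × ℕ → ℕ) :
    (((B.map f).sum : ℕ) : ℚ) = (B.map fun p => ((f p : ℕ) : ℚ)).sum := by
  rw [Nat.cast_multiset_sum, Multiset.map_map]; rfl

lemma eq_of_le_of_sum_eq {B : Multiset α} {f g : α → ℕ}
    (hle : ∀ p ∈ B, f p ≤ g p) (hsum : (B.map g).sum ≤ (B.map f).sum) :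
    ∀ p ∈ B, g p = f p := by
  induction B using Multiset.induction with
  | empty => intro p hp; simp at hp
  | cons a s ih =>
    intro p hp
    simp only [Multiset.map_cons, Multiset.sum_cons] at hsum
    have h1 : (s.map f).sum ≤ (s.map g).sum :=
      Multiset.sum_map_le_sum_map f g (fun i hi => hle i (Multiset.mem_cons_of_mem hi))
    have h2 : f a ≤ g a := hle a (Multiset.mem_cons_self a s)
    rcases Multiset.mem_cons.mp hp with rfl | hp'
    · omega
    · exact ih (fun q hq => hle q (Multiset.mem_cons_of_mem hq))
        (by omega) p hp'

lemma all_zero_of_sum_zero {B : Multiset α} {f : α → ℕ}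
    (h : (B.map f).sum = 0) : ∀ p ∈ B, f p = 0 := fun p hp =>
  Multiset.sum_eq_zero_iff.mp h _ (Multiset.mem_map_of_mem f hp)

lemma extract_sum_one {B : Multiset α} {f : α → ℕ}
    (h : (B.map f).sum = 1) : ∃ p B', B = p ::ₘ B' ∧ f p = 1 ∧ ∀ q ∈ B', f q = 0 := by
  induction B using Multiset.induction with
  | empty => simp at h
  | cons a s ih =>
    simp only [Multiset.map_cons, Multiset.sum_cons] at h
    rcases Nat.eq_zero_or_pos (f a) with h0 | h1
    · obtain ⟨p, B', rfl, hp1, hp0⟩ := ih (by omega)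
      refine ⟨p, a ::ₘ B', Multiset.cons_swap a p B', hp1, ?_⟩
      intro q hq
      rcases Multiset.mem_cons.mp hq with rfl | hq'
      · exact h0
      · exact hp0 q hq'
    · refine ⟨a, s, rfl, by omega, all_zero_of_sum_zero (f := f) (by omega)⟩

end msetutil

lemma sum_lin (B : Multiset (ℕ × ℕ)) (A C : ℚ) (f : ℕ × ℕ → ℕ) :
    (B.map fun p => A * cfun p - C * ((p.1 : ℕ) : ℚ) + ((f p : ℕ) : ℚ)).sum
      = A * (B.map cfun).sum - C * (((B.map fun p => p.1).sum : ℕ) : ℚ)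
        + (((B.map f).sum : ℕ) : ℚ) := by
  rw [Multiset.sum_map_add, Multiset.sum_map_sub, Multiset.sum_map_mul_left,
    Multiset.sum_map_mul_left, cast_sum_map, cast_sum_map]

lemma Pm3_eq (B : Multiset (ℕ × ℕ)) : Pm B 1 0 3
    = (5/2) * Kcube B 1 0 - 5 + (B.map (sfun 3)).sum := by rw [Pm_eq]; push_cast; ring
lemma Pm4_eq (B : Multiset (ℕ × ℕ)) : Pm B 1 0 4
    = 7 * Kcube B 1 0 - 7 + (B.map (sfun 4)).sum := by rw [Pm_eq]; push_cast; ring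
lemma Pm5_eq (B : Multiset (ℕ × ℕ)) : Pm B 1 0 5
    = 15 * Kcube B 1 0 - 9 + (B.map (sfun 5)).sum := by rw [Pm_eq]; push_cast; ring
lemma Pm6_eq (B : Multiset (ℕ × ℕ)) : Pm B 1 0 6
    = (55/2) * Kcube B 1 0 - 11 + (B.map (sfun 6)).sum := by rw [Pm_eq]; push_cast; ring

set_option maxHeartbeats 1000000 in
theorem classify (B : Multiset (ℕ × ℕ))
    (hmem : ∀ p ∈ B, (1 ≤ p.1 ∧ 2 * p.1 ≤ p.2) ∧ Nat.gcd p.1 p.2 = 1)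
    (h3 : Pm B 1 0 3 = 0) (h4 : Pm B 1 0 4 = 0) (h5 : Pm B 1 0 5 = 1)
    (h6 : Pm B 1 0 6 = 0) :
    ∃ a d m : ℕ, 1 ≤ a ∧ a + d + m = 5 ∧
      B = (2*a - 1, 5*a - 3) ::ₘ (2*d + 1, 5*d + 3) ::ₘ Multiset.replicate m (2, 5) := by
  have hmem' : ∀ p ∈ B, 1 ≤ p.1 ∧ 2 * p.1 ≤ p.2 := fun p hp => (hmem p hp).1
  -- the four sum identities
  have e3 : (B.map (sfun 3)).sum = (5/2) * (B.map cfun).sum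
      - 1 * (((B.map fun p => p.1).sum : ℕ) : ℚ) + (((B.map fun _ => 0).sum : ℕ) : ℚ) := by
    rw [Multiset.map_congr rfl (fun p hp => ?_), sum_lin]
    rw [sfun3 (hmem' p hp).1 (hmem' p hp).2]; push_cast; ring
  have e4 : (B.map (sfun 4)).sum = 7 * (B.map cfun).sum
      - 4 * (((B.map fun p => p.1).sum : ℕ) : ℚ)
      + (((B.map fun p => 3*p.1 - p.2).sum : ℕ) : ℚ) := by
    rw [Multiset.map_congr rfl (fun p hp => ?_), sum_lin]
    rw [sfun4 (hmem' p hp).1 (hmem' p hp).2]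
  have e5 : (B.map (sfun 5)).sum = 15 * (B.map cfun).sum
      - 10 * (((B.map fun p => p.1).sum : ℕ) : ℚ)
      + (((B.map fun p => (3*p.1 - p.2) + (4*p.1 - p.2)).sum : ℕ) : ℚ) := by
    rw [Multiset.map_congr rfl (fun p hp => ?_), sum_lin]
    rw [sfun5 (hmem' p hp).1 (hmem' p hp).2]
  have e6 : (B.map (sfun 6)).sum = (55/2) * (B.map cfun).sum
      - 20 * (((B.map fun p => p.1).sum : ℕ) : ℚ)
      + (((B.map fun p => ((3*p.1 - p.2) + (4*p.1 - p.2))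
            + ((5*p.1 - p.2) + (5*p.1 - 2*p.2))).sum : ℕ) : ℚ) := by
    rw [Multiset.map_congr rfl (fun p hp => ?_), sum_lin]
    rw [sfun6 (hmem' p hp).1 (hmem' p hp).2]
  have hzero : (((B.map fun (_ : ℕ × ℕ) => (0:ℕ)).sum : ℕ) : ℚ) = 0 := by
    simp
  rw [hzero] at e3
  rw [Pm3_eq, Kcube_eq, e3] at h3
  rw [Pm4_eq, Kcube_eq, e4] at h4
  rw [Pm5_eq, Kcube_eq, e5] at h5
  rw [Pm6_eq, Kcube_eq, e6] at h6
  set K := (B.map cfun).sum with hK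
  set xb : ℚ := (((B.map fun p => p.1).sum : ℕ) : ℚ) with hxb
  set x4 : ℚ := (((B.map fun p => 3*p.1 - p.2).sum : ℕ) : ℚ) with hx4
  set x5 : ℚ := (((B.map fun p => (3*p.1 - p.2) + (4*p.1 - p.2)).sum : ℕ) : ℚ) with hx5
  set x6 : ℚ := (((B.map fun p => ((3*p.1 - p.2) + (4*p.1 - p.2))
      + ((5*p.1 - p.2) + (5*p.1 - 2*p.2))).sum : ℕ) : ℚ) with hx6
  have N1 : (B.map fun p => p.1).sum = 10 := by
    have : xb = (10:ℕ) := by push_cast; linarith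
    rw [hxb] at this; exact_mod_cast this
  have N4 : (B.map fun p => 3*p.1 - p.2).sum = 5 := by
    have : x4 = (5:ℕ) := by push_cast; linarith
    rw [hx4] at this; exact_mod_cast this
  have N5 : (B.map fun p => (3*p.1 - p.2) + (4*p.1 - p.2)).sum = 20 := by
    have : x5 = (20:ℕ) := by push_cast; linarith
    rw [hx5] at this; exact_mod_cast this
  have N6 : (B.map fun p => ((3*p.1 - p.2) + (4*p.1 - p.2))
      + ((5*p.1 - p.2) + (5*p.1 - 2*p.2))).sum = 46 := by
    have : x6 = (46:ℕ) := by push_cast; linarith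
    rw [hx6] at this; exact_mod_cast this
  clear h3 h4 h5 h6 e3 e4 e5 e6 hzero hK hxb hx4 hx5 hx6
  -- Y = X + b pointwise, hence r ≤ 3b
  have NY : (B.map fun p => 4*p.1 - p.2).sum = 15 := by
    have := (Multiset.sum_map_add (m := B) (f := fun p => 3*p.1 - p.2)
      (g := fun p => 4*p.1 - p.2))
    omega
  have hr3 : ∀ p ∈ B, p.2 ≤ 3 * p.1 := by
    have hsum : (B.map fun p => (3*p.1 - p.2) + p.1).sum = 15 := by
      rw [Multiset.sum_map_add, N4, N1]
    have key := eq_of_le_of_sum_eq (B := B) (f := fun p => 4*p.1 - p.2)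
      (g := fun p => (3*p.1 - p.2) + p.1)
      (fun p _ => by show 4*p.1 - p.2 ≤ (3*p.1 - p.2) + p.1; omega) (by omega)
    intro p hp
    have h1 := hmem' p hp
    have h2 : (3*p.1 - p.2) + p.1 = 4*p.1 - p.2 := key p hp
    omega
  -- Σ(5b - r) = 25, hence Σ(5b - 2r) = 1
  have NZ : (B.map fun p => 5*p.1 - p.2).sum = 25 := by
    have he : (B.map fun p => 5*p.1 - p.2) = B.map fun p => (3*p.1 - p.2) + 2*p.1 :=
      Multiset.map_congr rfl (fun p hp => by have := hr3 p hp; have := hmem' p hp; omega)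
    have h2 : (B.map fun p => 2*p.1).sum = 2 * (B.map fun p => p.1).sum :=
      Multiset.sum_map_mul_left
    rw [he, Multiset.sum_map_add, N4]
    omega
  have NW : (B.map fun p => 5*p.1 - 2*p.2).sum = 1 := by
    have h1 := (Multiset.sum_map_add (m := B) (f := fun p => (3*p.1-p.2) + (4*p.1-p.2))
      (g := fun p => (5*p.1 - p.2) + (5*p.1 - 2*p.2)))
    have h2 := (Multiset.sum_map_add (m := B) (f := fun p => 5*p.1-p.2)
      (g := fun p => 5*p.1 - 2*p.2))
    omega
  -- Σ(2r - 5b) = 1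
  have NU : (B.map fun p => 2*p.2 - 5*p.1).sum = 1 := by
    have he : (B.map fun p => 2*(3*p.1 - p.2) + (2*p.2 - 5*p.1)).sum
        = (B.map fun p => p.1 + (5*p.1 - 2*p.2)).sum := by
      refine congrArg Multiset.sum (Multiset.map_congr rfl (fun p hp => ?_))
      have := hr3 p hp; have := hmem' p hp; omega
    have h1 := (Multiset.sum_map_add (m := B) (f := fun p => 2*(3*p.1 - p.2))
      (g := fun p => 2*p.2 - 5*p.1))
    have h2 := (Multiset.sum_map_add (m := B) (f := fun p => p.1)
      (g := fun p => 5*p.1 - 2*p.2))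
    have h3' : (B.map fun p => 2*(3*p.1 - p.2)).sum = 2 * (B.map fun p => 3*p.1 - p.2).sum :=
      Multiset.sum_map_mul_left
    omega
  -- extract the two distinguished elements
  obtain ⟨p₀, B₁, rfl, hW0, hWrest⟩ := extract_sum_one NW
  have hp₀m := hmem' p₀ (Multiset.mem_cons_self _ _)
  have hU0 : 2*p₀.2 - 5*p₀.1 = 0 := by omega
  have NU1 : (B₁.map fun p => 2*p.2 - 5*p.1).sum = 1 := by
    simp only [Multiset.map_cons, Multiset.sum_cons, hU0] at NU
    omega
  obtain ⟨p₁, B₂, rfl, hU1, hUrest⟩ := extract_sum_one NU1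
  have hp₁m := hmem' p₁ (Multiset.mem_cons_of_mem (Multiset.mem_cons_self _ _))
  have hW1 : 5*p₁.1 - 2*p₁.2 = 0 := hWrest p₁ (Multiset.mem_cons_self _ _)
  -- all remaining elements are (2,5)
  have hB2 : ∀ q ∈ B₂, q = (2, 5) := by
    intro q hq
    have hqB : q ∈ p₀ ::ₘ p₁ ::ₘ B₂ :=
      Multiset.mem_cons_of_mem (Multiset.mem_cons_of_mem hq)
    have hg := (hmem q hqB).2
    have hb := (hmem q hqB).1
    have hWq : 5*q.1 - 2*q.2 = 0 := hWrest q (Multiset.mem_cons_of_mem hq)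
    have hUq : 2*q.2 - 5*q.1 = 0 := hUrest q hq
    have h2d : 2 ∣ q.1 := by omega
    obtain ⟨k, hk⟩ := h2d
    have hq2 : q.2 = 5 * k := by omega
    have hgk : Nat.gcd q.1 q.2 = k := by
      rw [hk, hq2, show (2:ℕ)*k = 2*k from rfl, Nat.gcd_mul_right 2 k 5]
      norm_num
    have hk1 : k = 1 := by rw [hgk] at hg; omega
    have hq1' : q.1 = 2 := by omega
    have hq2' : q.2 = 5 := by omega
    exact Prod.ext hq1' hq2'
  have hrep : B₂ = Multiset.replicate (Multiset.card B₂) (2, 5) :=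
    Multiset.eq_replicate.mpr ⟨rfl, hB2⟩
  obtain ⟨a, ha1, ha2, ha3⟩ : ∃ a, 1 ≤ a ∧ p₀.1 = 2*a - 1 ∧ p₀.2 = 5*a - 3 :=
    ⟨(p₀.1 + 1)/2, by omega⟩
  obtain ⟨d, hd2, hd3⟩ : ∃ d, p₁.1 = 2*d + 1 ∧ p₁.2 = 5*d + 3 :=
    ⟨p₁.1/2, by omega⟩
  have hcard : (2*a - 1) + ((2*d + 1) + 2 * Multiset.card B₂) = 10 := by
    simp only [Multiset.map_cons, Multiset.sum_cons] at N1
    rw [hrep, Multiset.map_replicate, Multiset.sum_replicate, smul_eq_mul] at N1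
    omega
  have hp0 : p₀ = (2*a - 1, 5*a - 3) := Prod.ext_iff.mpr ⟨ha2, ha3⟩
  have hp1 : p₁ = (2*d + 1, 5*d + 3) := Prod.ext_iff.mpr ⟨hd2, hd3⟩
  refine ⟨a, d, Multiset.card B₂, ha1, by omega, ?_⟩
  rw [hp0, hp1, ← hrep]

lemma normalize_coprime : ∀ (B : Multiset (ℕ × ℕ)),
    (∀ p ∈ B, Nat.gcd p.1 p.2 = 1) → normalizeBasket B = B := by
  intro B
  induction B using Multiset.induction with
  | empty => intro _; rfl
  | cons a s ih =>
    intro h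
    rw [normalizeBasket, Multiset.cons_bind]
    rw [h a (Multiset.mem_cons_self a s)]
    simp only [Nat.div_one, Multiset.replicate_one]
    rw [show (s.bind fun p => Multiset.replicate (Nat.gcd p.1 p.2)
      (p.1 / Nat.gcd p.1 p.2, p.2 / Nat.gcd p.1 p.2)) = normalizeBasket s from rfl,
      ih (fun p hp => h p (Multiset.mem_cons_of_mem hp)), Multiset.singleton_add]

lemma cop_special (a : ℕ) (ha : 1 ≤ a) : Nat.gcd (2*a - 1) (5*a - 3) = 1 := by
  have d1 : Nat.gcd (2*a - 1) (5*a - 3) ∣ 10*a - 5 := by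
    rw [show 10*a - 5 = 5*(2*a - 1) by omega]
    exact (Nat.gcd_dvd_left _ _).mul_left 5
  have d2 : Nat.gcd (2*a - 1) (5*a - 3) ∣ 10*a - 6 := by
    rw [show 10*a - 6 = 2*(5*a - 3) by omega]
    exact (Nat.gcd_dvd_right _ _).mul_left 2
  have := Nat.dvd_sub d1 d2
  rw [show (10*a - 5) - (10*a - 6) = 1 by omega] at this
  exact Nat.dvd_one.mp this

lemma cop_defect (d : ℕ) : Nat.gcd (2*d + 1) (5*d + 3) = 1 := by
  have d1 : Nat.gcd (2*d + 1) (5*d + 3) ∣ 10*d + 5 := by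
    rw [show 10*d + 5 = 5*(2*d + 1) by ring]
    exact (Nat.gcd_dvd_left _ _).mul_left 5
  have d2 : Nat.gcd (2*d + 1) (5*d + 3) ∣ 10*d + 6 := by
    rw [show 10*d + 6 = 2*(5*d + 3) by ring]
    exact (Nat.gcd_dvd_right _ _).mul_left 2
  have := Nat.dvd_sub d2 d1
  rw [show (10*d + 6) - (10*d + 5) = 1 by omega] at this
  exact Nat.dvd_one.mp this

lemma packstep_merge (p q : ℕ × ℕ) (S : Multiset (ℕ × ℕ))
    (h : ∀ x ∈ (p.1 + q.1, p.2 + q.2) ::ₘ S, Nat.gcd x.1 x.2 = 1) :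
    PackStep (p ::ₘ q ::ₘ S) ((p.1 + q.1, p.2 + q.2) ::ₘ S) :=
  ⟨_, ⟨p, q, S, rfl, rfl⟩, normalize_coprime _ h⟩

lemma chain (d : ℕ) : ∀ m a : ℕ, 1 ≤ a →
    Relation.ReflTransGen PackStep
      ((2*a - 1, 5*a - 3) ::ₘ (2*d + 1, 5*d + 3) ::ₘ Multiset.replicate m (2, 5))
      ((2*(a+m) - 1, 5*(a+m) - 3) ::ₘ (2*d + 1, 5*d + 3) ::ₘ 0) := by
  intro m
  induction m with
  | zero => intro a ha; simpa using Relation.ReflTransGen.refl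
  | succ m ih =>
    intro a ha
    have hstep : PackStep
        ((2*a - 1, 5*a - 3) ::ₘ (2*d + 1, 5*d + 3) ::ₘ Multiset.replicate (m+1) (2, 5))
        ((2*(a+1) - 1, 5*(a+1) - 3) ::ₘ (2*d + 1, 5*d + 3) ::ₘ Multiset.replicate m (2, 5)) := by
      have e1 : (2*a - 1, 5*a - 3) ::ₘ (2*d + 1, 5*d + 3) ::ₘ Multiset.replicate (m+1) (2, 5)
          = (2*a - 1, 5*a - 3) ::ₘ (2, 5) ::ₘ ((2*d + 1, 5*d + 3) ::ₘ Multiset.replicate m (2, 5)) := by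
        rw [Multiset.replicate_succ]
        exact congrArg _ (Multiset.cons_swap _ _ _)
      have e2 : ((2*a - 1, 5*a - 3).1 + (2, 5).1, (2*a - 1, 5*a - 3).2 + (2, 5).2)
          = ((2*(a+1) - 1, 5*(a+1) - 3) : ℕ × ℕ) := by
        refine Prod.ext_iff.mpr ⟨?_, ?_⟩ <;> simp <;> omega
      have hcop : ∀ x ∈ ((2*a - 1, 5*a - 3).1 + (2, 5).1, (2*a - 1, 5*a - 3).2 + (2, 5).2) ::ₘ
          ((2*d + 1, 5*d + 3) ::ₘ Multiset.replicate m (2, 5)), Nat.gcd x.1 x.2 = 1 := by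
        rw [e2]
        intro x hx
        rcases Multiset.mem_cons.mp hx with rfl | hx
        · exact cop_special (a+1) (by omega)
        · rcases Multiset.mem_cons.mp hx with rfl | hx
          · exact cop_defect d
          · rw [Multiset.eq_of_mem_replicate hx]; rfl
      have hps := packstep_merge (2*a - 1, 5*a - 3) (2, 5)
        ((2*d + 1, 5*d + 3) ::ₘ Multiset.replicate m (2, 5)) hcop
      rw [e2] at hps
      rw [e1]
      exact hps
    exact Relation.ReflTransGen.head hstep
      (by rw [show a + (m+1) = (a+1) + m by omega] at *; exact ih (a+1) (by omega))

lemma sfun10_eval (b r : ℕ) (v : ℚ) (h :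
    qterm (b,r) 1 + qterm (b,r) 2 + qterm (b,r) 3 + qterm (b,r) 4 + qterm (b,r) 5
    + qterm (b,r) 6 + qterm (b,r) 7 + qterm (b,r) 8 + qterm (b,r) 9 = v) :
    sfun 10 (b, r) = v := by
  rw [sfun, show (10:ℕ) - 1 = 9 from rfl]
  rw [Finset.sum_Icc_succ_top (by norm_num), Finset.sum_Icc_succ_top (by norm_num),
    Finset.sum_Icc_succ_top (by norm_num), Finset.sum_Icc_succ_top (by norm_num),
    Finset.sum_Icc_succ_top (by norm_num), Finset.sum_Icc_succ_top (by norm_num),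
    Finset.sum_Icc_succ_top (by norm_num), Finset.sum_Icc_succ_top (by norm_num),
    Finset.Icc_self, Finset.sum_singleton]
  exact h

lemma sv_1_2 : sfun 10 ((1:ℕ), (2:ℕ)) = 5/4 := sfun10_eval _ _ _ (by norm_num [qterm])
lemma sv_3_7 : sfun 10 ((3:ℕ), (7:ℕ)) = 37/7 := sfun10_eval _ _ _ (by norm_num [qterm])
lemma sv_5_12 : sfun 10 ((5:ℕ), (12:ℕ)) = 77/8 := sfun10_eval _ _ _ (by norm_num [qterm])
lemma sv_7_17 : sfun 10 ((7:ℕ), (17:ℕ)) = 234/17 := sfun10_eval _ _ _ (by norm_num [qterm])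
lemma sv_9_22 : sfun 10 ((9:ℕ), (22:ℕ)) = 785/44 := sfun10_eval _ _ _ (by norm_num [qterm])
lemma sv_1_3 : sfun 10 ((1:ℕ), (3:ℕ)) = 2 := sfun10_eval _ _ _ (by norm_num [qterm])
lemma sv_3_8 : sfun 10 ((3:ℕ), (8:ℕ)) = 99/16 := sfun10_eval _ _ _ (by norm_num [qterm])
lemma sv_5_13 : sfun 10 ((5:ℕ), (13:ℕ)) = 136/13 := sfun10_eval _ _ _ (by norm_num [qterm])
lemma sv_7_18 : sfun 10 ((7:ℕ), (18:ℕ)) = 175/12 := sfun10_eval _ _ _ (by norm_num [qterm])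
lemma sv_9_23 : sfun 10 ((9:ℕ), (23:ℕ)) = 429/23 := sfun10_eval _ _ _ (by norm_num [qterm])
lemma sv_2_5 : sfun 10 ((2:ℕ), (5:ℕ)) = 4 := sfun10_eval _ _ _ (by norm_num [qterm])

lemma Pm10_eq (B : Multiset (ℕ × ℕ)) : Pm B 1 0 10
    = (285/2) * Kcube B 1 0 - 19 + (B.map (sfun 10)).sum := by rw [Pm_eq]; push_cast; ring

set_option maxHeartbeats 2000000 in
/-- Case `(P₃,P₄,P₅,P₆) = (0,0,1,0)`: `B` dominates one of five baskets;
consequently `K³ ≥ 1/156` and `P₁₀ ≥ 2`. -/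
theorem case_III (B : Multiset (ℕ × ℕ))
    (hadm : Admissible B 0)
    (h3 : Pm B 1 0 3 = 0) (h4 : Pm B 1 0 4 = 0) (h5 : Pm B 1 0 5 = 1)
    (h6 : Pm B 1 0 6 = 0) :
    (Dominates B {(9,22),(1,3)} ∨ Dominates B {(7,17),(3,8)} ∨
      Dominates B {(5,12),(5,13)} ∨ Dominates B {(3,7),(7,18)} ∨
      Dominates B {(1,2),(9,23)}) ∧
    (1 / 156 : ℚ) ≤ Kcube B 1 0 ∧ 2 ≤ Pm B 1 0 10 := by
  obtain ⟨hbasket, -, hgcd, -, -, -, -⟩ := hadm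
  have hmem : ∀ p ∈ B, (1 ≤ p.1 ∧ 2*p.1 ≤ p.2) ∧ Nat.gcd p.1 p.2 = 1 :=
    fun p hp => ⟨⟨(hbasket p hp).1, (hbasket p hp).2⟩, hgcd p hp⟩
  obtain ⟨a, d, m, ha, hsum5, rfl⟩ := classify B hmem h3 h4 h5 h6
  have had5 : a + d ≤ 5 := by omega
  have hnormB : normalizeBasket
      ((2*a - 1, 5*a - 3) ::ₘ (2*d + 1, 5*d + 3) ::ₘ Multiset.replicate m (2, 5))
      = (2*a - 1, 5*a - 3) ::ₘ (2*d + 1, 5*d + 3) ::ₘ Multiset.replicate m (2, 5) := by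
    refine normalize_coprime _ (fun x hx => ?_)
    rcases Multiset.mem_cons.mp hx with rfl | hx
    · exact cop_special a ha
    · rcases Multiset.mem_cons.mp hx with rfl | hx
      · exact cop_defect d
      · rw [Multiset.eq_of_mem_replicate hx]; rfl
  refine ⟨?_, ?_, ?_⟩
  · -- Dominance
    have hch := chain d m a ha
    rw [show a + m = 5 - d by omega] at hch
    have hd4 : d ≤ 4 := by omega
    interval_cases d
    · refine Or.inl ?_
      show Relation.ReflTransGen PackStep _ _
      rw [hnormB, normalize_coprime _ (fun x hx => ?_)]
      · have e : ((2*(5-0) - 1, 5*(5-0) - 3) ::ₘ (2*0 + 1, 5*0 + 3) ::ₘ (0 : Multiset (ℕ × ℕ)))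
            = ({(9,22),(1,3)} : Multiset (ℕ × ℕ)) := by decide
        rw [e] at hch; exact hch
      · simp only [Multiset.insert_eq_cons, Multiset.mem_cons, Multiset.mem_singleton] at hx
        rcases hx with rfl | rfl <;> norm_num
    · refine Or.inr (Or.inl ?_)
      show Relation.ReflTransGen PackStep _ _
      rw [hnormB, normalize_coprime _ (fun x hx => ?_)]
      · have e : ((2*(5-1) - 1, 5*(5-1) - 3) ::ₘ (2*1 + 1, 5*1 + 3) ::ₘ (0 : Multiset (ℕ × ℕ)))
            = ({(7,17),(3,8)} : Multiset (ℕ × ℕ)) := by decide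
        rw [e] at hch; exact hch
      · simp only [Multiset.insert_eq_cons, Multiset.mem_cons, Multiset.mem_singleton] at hx
        rcases hx with rfl | rfl <;> norm_num
    · refine Or.inr (Or.inr (Or.inl ?_))
      show Relation.ReflTransGen PackStep _ _
      rw [hnormB, normalize_coprime _ (fun x hx => ?_)]
      · have e : ((2*(5-2) - 1, 5*(5-2) - 3) ::ₘ (2*2 + 1, 5*2 + 3) ::ₘ (0 : Multiset (ℕ × ℕ)))
            = ({(5,12),(5,13)} : Multiset (ℕ × ℕ)) := by decide
        rw [e] at hch; exact hch
      · simp only [Multiset.insert_eq_cons, Multiset.mem_cons, Multiset.mem_singleton] at hx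
        rcases hx with rfl | rfl <;> norm_num
    · refine Or.inr (Or.inr (Or.inr (Or.inl ?_)))
      show Relation.ReflTransGen PackStep _ _
      rw [hnormB, normalize_coprime _ (fun x hx => ?_)]
      · have e : ((2*(5-3) - 1, 5*(5-3) - 3) ::ₘ (2*3 + 1, 5*3 + 3) ::ₘ (0 : Multiset (ℕ × ℕ)))
            = ({(3,7),(7,18)} : Multiset (ℕ × ℕ)) := by decide
        rw [e] at hch; exact hch
      · simp only [Multiset.insert_eq_cons, Multiset.mem_cons, Multiset.mem_singleton] at hx
        rcases hx with rfl | rfl <;> norm_num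
    · refine Or.inr (Or.inr (Or.inr (Or.inr ?_)))
      show Relation.ReflTransGen PackStep _ _
      rw [hnormB, normalize_coprime _ (fun x hx => ?_)]
      · have e : ((2*(5-4) - 1, 5*(5-4) - 3) ::ₘ (2*4 + 1, 5*4 + 3) ::ₘ (0 : Multiset (ℕ × ℕ)))
            = ({(1,2),(9,23)} : Multiset (ℕ × ℕ)) := by decide
        rw [e] at hch; exact hch
      · simp only [Multiset.insert_eq_cons, Multiset.mem_cons, Multiset.mem_singleton] at hx
        rcases hx with rfl | rfl <;> norm_num
  · -- Kcube bound
    rw [Kcube_eq]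
    simp only [Multiset.map_cons, Multiset.sum_cons, Multiset.map_replicate,
      Multiset.sum_replicate, nsmul_eq_mul]
    have hm : m = 5 - a - d := by omega
    subst hm
    have ha5 : a ≤ 5 := by omega
    have hd4 : d ≤ 4 := by omega
    interval_cases a <;> interval_cases d <;>
      first
      | (exfalso; omega)
      | norm_num [cfun]
  · -- P₁₀ bound
    rw [Pm10_eq, Kcube_eq]
    simp only [Multiset.map_cons, Multiset.sum_cons, Multiset.map_replicate,
      Multiset.sum_replicate, nsmul_eq_mul]
    have hm : m = 5 - a - d := by omega
    subst hm
    have ha5 : a ≤ 5 := by omega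
    have hd4 : d ≤ 4 := by omega
    interval_cases a <;> interval_cases d <;>
      first
      | (exfalso; omega)
      | norm_num [cfun, sv_1_2, sv_3_7, sv_5_12, sv_7_17, sv_9_22,
          sv_1_3, sv_3_8, sv_5_13, sv_7_18, sv_9_23, sv_2_5]
end

section
/- There is no admissible triple (B,1,0) with (P₃,P₄,P₅,P₆)(B,1,0) = (1,0,1,1). -/
/-- correction term -/
noncomputable def cterm (j : ℕ) (p : ℕ × ℕ) : ℚ :=
  ((j * p.1 % p.2 : ℕ) : ℚ) * ((p.2 : ℚ) - ((j * p.1 % p.2 : ℕ) : ℚ)) / (2 * (p.2 : ℚ))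

lemma nat_key (x y z r : ℕ) (hx : x < r) (hy : y < r) (hz : z < r)
    (hc : (x + y) % r = z) : x * (r - x) ≤ y * (r - y) + z * (r - z) := by
  have hr : 0 < r := by omega
  have h1 := Nat.div_add_mod (x + y) r
  rw [hc] at h1
  have h2 : (x + y) / r < 2 := Nat.div_lt_of_lt_mul (by omega)
  have hq : (x + y) / r = 0 ∨ (x + y) / r = 1 := by
    rcases Nat.lt_succ_iff_lt_or_eq.mp h2 with h | h
    · exact Or.inl (Nat.lt_one_iff.mp h)
    · exact Or.inr h
  rcases hq with hq | hq <;> rw [hq] at h1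
  · -- x + y = z
    have hzxy : z = x + y := by omega
    zify [hx.le, hy.le, hz.le]
    nlinarith [mul_nonneg (show (0:ℤ) ≤ (y:ℤ) by positivity)
      (sub_nonneg.mpr (show (z:ℤ) ≤ (r:ℤ) by exact_mod_cast hz.le)),
      (show (z:ℤ) = (x:ℤ) + y by exact_mod_cast hzxy)]
  · -- x + y = z + r
    have hzxy : x + y = z + r := by omega
    zify [hx.le, hy.le, hz.le]
    nlinarith [mul_nonneg (show (0:ℤ) ≤ (z:ℤ) by positivity)
      (sub_nonneg.mpr (show (y:ℤ) ≤ (r:ℤ) by exact_mod_cast hy.le)),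
      (show (x:ℤ) + (y:ℤ) = (z:ℤ) + (r:ℤ) by exact_mod_cast hzxy)]

lemma key_ineq (p : ℕ × ℕ) (hb : 0 < p.1) (hbr : 2 * p.1 ≤ p.2) :
    cterm 2 p ≤ cterm 3 p + cterm 5 p := by
  obtain ⟨b, r⟩ := p
  simp only [cterm]
  simp only at hb hbr ⊢
  have hr : 0 < r := by omega
  set x := 2 * b % r with hxd
  set y := 3 * b % r with hyd
  set z := 5 * b % r with hzd
  have hx : x < r := Nat.mod_lt _ hr
  have hy : y < r := Nat.mod_lt _ hr
  have hz : z < r := Nat.mod_lt _ hr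
  have hc : (x + y) % r = z := by
    rw [hxd, hyd, hzd, ← Nat.add_mod]
    ring_nf
  have hmain := nat_key x y z r hx hy hz hc
  have hmainq : (x:ℚ) * ((r:ℚ) - x) ≤ (y:ℚ) * ((r:ℚ) - y) + (z:ℚ) * ((r:ℚ) - z) := by
    have := hmain
    zify [hx.le, hy.le, hz.le] at this
    exact_mod_cast this
  rw [← add_div]
  have h2r : (0:ℚ) < 2 * (r:ℚ) := by positivity
  gcongr

lemma sum_map_finsum (B : Multiset (ℕ × ℕ)) (s : Finset ℕ) (f : ℕ → ℕ × ℕ → ℚ) :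
    (B.map fun p => ∑ j ∈ s, f j p).sum = ∑ j ∈ s, (B.map fun p => f j p).sum := by
  induction B using Multiset.induction with
  | empty => simp
  | cons a B ih => simp [ih, Finset.sum_add_distrib]

/-- There is no admissible triple `(B,1,0)` with `(P₃,P₄,P₅,P₆) = (1,0,1,1)`. -/
theorem case_VII :
    ¬ ∃ B : Multiset (ℕ × ℕ), Admissible B 0 ∧
      Pm B 1 0 3 = 1 ∧ Pm B 1 0 4 = 0 ∧ Pm B 1 0 5 = 1 ∧ Pm B 1 0 6 = 1 := by
  rintro ⟨B, ⟨hBk, -, -, hK, -, -, -⟩, h3, h4, h5, h6⟩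
  set K := Kcube B 1 0 with hKd
  set T : ℕ → ℚ := fun j => (B.map fun p => cterm j p).sum with hTd
  have hP : ∀ m : ℕ, Pm B 1 0 m = (1/12)*(m:ℚ)*((m:ℚ)-1)*(2*(m:ℚ)-1)*K
      + (1-2*(m:ℚ)) + ∑ j ∈ Finset.Icc 1 (m-1), T j := by
    intro m
    have h0 : Pm B 1 0 m = (1/12)*(m:ℚ)*((m:ℚ)-1)*(2*(m:ℚ)-1)*K
        + (1-2*(m:ℚ))*((1:ℤ):ℚ)
        + (B.map fun p => ∑ j ∈ Finset.Icc 1 (m-1), cterm j p).sum := rfl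
    rw [h0, sum_map_finsum]; norm_num; rfl
  have i3 : ∑ j ∈ Finset.Icc 1 2, T j = T 1 + T 2 := by
    show ∑ j ∈ ({1,2} : Finset ℕ), T j = _
    simp [Finset.sum_insert, Finset.mem_insert]
  have i4 : ∑ j ∈ Finset.Icc 1 3, T j = T 1 + T 2 + T 3 := by
    show ∑ j ∈ ({1,2,3} : Finset ℕ), T j = _
    simp [Finset.sum_insert, Finset.mem_insert]; ring
  have i5 : ∑ j ∈ Finset.Icc 1 4, T j = T 1 + T 2 + T 3 + T 4 := by
    show ∑ j ∈ ({1,2,3,4} : Finset ℕ), T j = _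
    simp [Finset.sum_insert, Finset.mem_insert]; ring
  have i6 : ∑ j ∈ Finset.Icc 1 5, T j = T 1 + T 2 + T 3 + T 4 + T 5 := by
    show ∑ j ∈ ({1,2,3,4,5} : Finset ℕ), T j = _
    simp [Finset.sum_insert, Finset.mem_insert]; ring
  rw [hP 3] at h3; rw [hP 4] at h4; rw [hP 5] at h5; rw [hP 6] at h6
  norm_num [i3, i4, i5, i6] at h3 h4 h5 h6
  -- T 1 = (6 - K) / 2
  have hT1 : T 1 = (6 - K) / 2 := by
    have hS : (B.map fun p => (p.1:ℚ)*((p.2:ℚ)-(p.1:ℚ))/(p.2:ℚ)).sum = 6 - K := by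
      rw [hKd, Kcube]; push_cast; ring
    have h1 : T 1
        = (B.map fun p => ((p.1:ℚ)*((p.2:ℚ)-(p.1:ℚ))/(p.2:ℚ)) * (1/2)).sum := by
      apply congrArg Multiset.sum
      apply Multiset.map_congr rfl
      intro p hp
      obtain ⟨hb, hbr⟩ := hBk p hp
      have hblt : p.1 < p.2 := by omega
      have hm : 1 * p.1 % p.2 = p.1 := by rw [one_mul]; exact Nat.mod_eq_of_lt hblt
      simp only [cterm, hm]
      rw [mul_one_div, div_div]
      ring_nf
    rw [h1, Multiset.sum_map_mul_right, hS]
    ring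
  -- key inequality
  have hkey : T 2 ≤ T 3 + T 5 := by
    rw [hTd]
    simp only
    rw [← Multiset.sum_map_add]
    exact Multiset.sum_map_le_sum_map _ _
      (fun p hp => key_ineq p (hBk p hp).1 (hBk p hp).2)
  linarith
end

section
/- Let B be a basket such that {2×(2,5), 2×(1,3), 3×(1,4)} ≽ B ≽ {2×(2,5),(1,3),(3,11),(1,4)} and B ≠ {2×(2,5),(1,3),(3,11),(1,4)}. Then B ≽ {2×(2,5),(1,3),(2,7),2×(1,4)}; in particular K³(B,1,0) ≥ 1/210. -/
namespace UnpackB83Aux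

/-- The defect sum `Σ b(r-b)/r`. -/
def S3 (N : Multiset (ℕ × ℕ)) : ℚ :=
  (N.map fun p => (p.1 : ℚ) * ((p.2 : ℚ) - (p.1 : ℚ)) / (p.2 : ℚ)).sum

def InvP (x : ℕ × ℕ) : Prop := Nat.gcd x.1 x.2 = 1 ∧ 5 * x.1 ≤ 2 * x.2 ∧ 0 < x.2

instance : DecidablePred InvP := fun x => by unfold InvP; infer_instance

def Inv (N : Multiset (ℕ × ℕ)) : Prop := ∀ x ∈ N, InvP x

def cnt (N : Multiset (ℕ × ℕ)) : ℕ := Multiset.count (2,5) N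

def succs (M : Multiset (ℕ × ℕ)) : Multiset (Multiset (ℕ × ℕ)) :=
  M.bind fun p => (M.erase p).map fun q =>
    normalizeBasket ((p.1 + q.1, p.2 + q.2) ::ₘ ((M.erase p).erase q))

def TT : Multiset (ℕ × ℕ) := {(2,5),(2,5),(1,3),(1,3),(1,4),(1,4),(1,4)}
def YY : Multiset (ℕ × ℕ) := {(2,5),(2,5),(1,3),(2,7),(1,4),(1,4)}
def XX : Multiset (ℕ × ℕ) := {(2,5),(2,5),(1,3),(3,11),(1,4)}
def B1 : Multiset (ℕ × ℕ) := {(2,5),(2,5),(3,10),(1,4),(1,4)}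
def B2 : Multiset (ℕ × ℕ) := {(2,5),(2,5),(2,7),(2,7),(1,4)}
def B3 : Multiset (ℕ × ℕ) := {(2,5),(2,5),(2,7),(3,11)}
def B4 : Multiset (ℕ × ℕ) := {(2,5),(2,5),(1,3),(4,15)}

lemma S3_cons (a : ℕ × ℕ) (s : Multiset (ℕ × ℕ)) :
    S3 (a ::ₘ s) = (a.1 : ℚ) * ((a.2 : ℚ) - (a.1 : ℚ)) / (a.2 : ℚ) + S3 s := by
  simp [S3]

lemma S3_add (s t : Multiset (ℕ × ℕ)) : S3 (s + t) = S3 s + S3 t := by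
  simp [S3]

lemma mem_succs {M N : Multiset (ℕ × ℕ)} (h : PackStep M N) : N ∈ succs M := by
  obtain ⟨C, ⟨p, q, S, h1, h2⟩, h3⟩ := h
  subst h2
  have hp : p ∈ M := h1 ▸ Multiset.mem_cons_self p _
  have he : M.erase p = q ::ₘ S := by rw [h1, Multiset.erase_cons_head]
  have hq : q ∈ M.erase p := he ▸ Multiset.mem_cons_self q S
  have hS : (M.erase p).erase q = S := by rw [he, Multiset.erase_cons_head]
  subst h3
  exact Multiset.mem_bind.2 ⟨p, hp, Multiset.mem_map.2 ⟨q, hq, by rw [hS]⟩⟩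

lemma sval_superadd (b1 r1 b2 r2 : ℕ) (h1 : 0 < r1) (h2 : 0 < r2) :
    (b1:ℚ) * ((r1:ℚ) - (b1:ℚ)) / (r1:ℚ) + (b2:ℚ) * ((r2:ℚ) - (b2:ℚ)) / (r2:ℚ) ≤
    ((b1 + b2 : ℕ):ℚ) * (((r1 + r2 : ℕ):ℚ) - ((b1 + b2 : ℕ):ℚ)) / ((r1 + r2 : ℕ):ℚ) := by
  have hr1 : (0:ℚ) < (r1:ℚ) := by exact_mod_cast h1
  have hr2 : (0:ℚ) < (r2:ℚ) := by exact_mod_cast h2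
  push_cast
  rw [div_add_div _ _ (ne_of_gt hr1) (ne_of_gt hr2),
    div_le_div_iff₀ (by positivity) (by positivity)]
  nlinarith [sq_nonneg ((b1:ℚ) * (r2:ℚ) - (b2:ℚ) * (r1:ℚ)), hr1.le, hr2.le,
    mul_pos hr1 hr2]

lemma S3_norm_single (b r : ℕ) (hr : 0 < r) :
    S3 (Multiset.replicate (Nat.gcd b r) (b / Nat.gcd b r, r / Nat.gcd b r)) =
      (b : ℚ) * ((r : ℚ) - (b : ℚ)) / (r : ℚ) := by
  have hg : 0 < Nat.gcd b r := Nat.gcd_pos_of_pos_right _ hr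
  have hgq : ((Nat.gcd b r : ℕ) : ℚ) ≠ 0 := by exact_mod_cast hg.ne'
  have hb : ((b / Nat.gcd b r : ℕ) : ℚ) = (b : ℚ) / (Nat.gcd b r : ℚ) :=
    Nat.cast_div (Nat.gcd_dvd_left b r) hgq
  have hr2 : ((r / Nat.gcd b r : ℕ) : ℚ) = (r : ℚ) / (Nat.gcd b r : ℚ) :=
    Nat.cast_div (Nat.gcd_dvd_right b r) hgq
  have hrq : ((r : ℕ) : ℚ) ≠ 0 := by exact_mod_cast hr.ne'
  simp only [S3, Multiset.map_replicate, Multiset.sum_replicate, nsmul_eq_mul, hb, hr2]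
  field_simp

lemma S3_normalize (C : Multiset (ℕ × ℕ)) (hC : ∀ p ∈ C, 0 < p.2) :
    S3 (normalizeBasket C) = S3 C := by
  induction C using Multiset.induction_on with
  | empty => simp [normalizeBasket, S3]
  | cons a s ih =>
    rw [normalizeBasket, Multiset.cons_bind, S3_add,
      show (s.bind fun p => Multiset.replicate (Nat.gcd p.1 p.2)
        (p.1 / Nat.gcd p.1 p.2, p.2 / Nat.gcd p.1 p.2)) = normalizeBasket s from rfl,
      ih fun p hp => hC p (Multiset.mem_cons_of_mem hp),
      S3_norm_single a.1 a.2 (hC a (Multiset.mem_cons_self a s)), S3_cons]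

lemma normalize_coprime (S : Multiset (ℕ × ℕ)) (h : ∀ p ∈ S, Nat.gcd p.1 p.2 = 1) :
    normalizeBasket S = S := by
  induction S using Multiset.induction_on with
  | empty => simp [normalizeBasket]
  | cons a s ih =>
    rw [normalizeBasket, Multiset.cons_bind,
      show (s.bind fun p => Multiset.replicate (Nat.gcd p.1 p.2)
        (p.1 / Nat.gcd p.1 p.2, p.2 / Nat.gcd p.1 p.2)) = normalizeBasket s from rfl,
      ih fun p hp => h p (Multiset.mem_cons_of_mem hp),
      h a (Multiset.mem_cons_self a s)]
    simp

lemma eq_two_five {p : ℕ × ℕ} (hcop : Nat.gcd p.1 p.2 = 1) (heq : 5 * p.1 = 2 * p.2) :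
    p = (2, 5) := by
  have hd : p.1 ∣ 2 * p.2 := ⟨5, by omega⟩
  have h2 : p.1 ∣ 2 := Nat.Coprime.dvd_of_dvd_mul_right hcop hd
  have hle : p.1 ≤ 2 := Nat.le_of_dvd (by norm_num) h2
  have h1 : p.1 = 2 ∧ p.2 = 5 := by
    rcases Nat.lt_or_ge p.1 1 with h | h
    · exfalso
      have hp1 : p.1 = 0 := by omega
      have hp2 : p.2 = 0 := by omega
      rw [hp1, hp2] at hcop
      simp at hcop
    · omega
  obtain ⟨a, b⟩ := p
  simp only [Prod.mk.injEq]
  exact h1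

lemma strict_of_ne {p : ℕ × ℕ} (h : InvP p) (hne : p ≠ (2,5)) : 5 * p.1 < 2 * p.2 :=
  lt_of_le_of_ne h.2.1 fun heq => hne (eq_two_five h.1 heq)

lemma invP_normalize {C : Multiset (ℕ × ℕ)} (hC : ∀ y ∈ C, 5 * y.1 ≤ 2 * y.2 ∧ 0 < y.2) :
    Inv (normalizeBasket C) := by
  intro x hx
  rw [normalizeBasket, Multiset.mem_bind] at hx
  obtain ⟨y, hy, hxy⟩ := hx
  obtain ⟨h5, h0⟩ := hC y hy
  have hg : 0 < Nat.gcd y.1 y.2 := Nat.gcd_pos_of_pos_right _ h0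
  have hx' := Multiset.eq_of_mem_replicate hxy
  subst hx'
  obtain ⟨a, ha⟩ := Nat.gcd_dvd_left y.1 y.2
  obtain ⟨b, hb⟩ := Nat.gcd_dvd_right y.1 y.2
  have hda : y.1 / Nat.gcd y.1 y.2 = a := Nat.div_eq_of_eq_mul_right hg ha
  have hdb : y.2 / Nat.gcd y.1 y.2 = b := Nat.div_eq_of_eq_mul_right hg hb
  have hcop : Nat.gcd a b = 1 := by
    have h := Nat.coprime_div_gcd_div_gcd (m := y.1) (n := y.2) hg
    rwa [hda, hdb] at h
  refine ⟨by rw [hda, hdb]; exact hcop, ?_, ?_⟩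
  · rw [hda, hdb]
    refine Nat.le_of_mul_le_mul_left ?_ hg
    calc Nat.gcd y.1 y.2 * (5 * a) = 5 * (Nat.gcd y.1 y.2 * a) := by ring
      _ = 5 * y.1 := by rw [← ha]
      _ ≤ 2 * y.2 := h5
      _ = 2 * (Nat.gcd y.1 y.2 * b) := by rw [← hb]
      _ = Nat.gcd y.1 y.2 * (2 * b) := by ring
  · rw [hdb]
    rcases Nat.eq_zero_or_pos b with h | h
    · exfalso; rw [h, mul_zero] at hb; omega
    · exact h

lemma cnt_norm_cons (p q : ℕ × ℕ) (S : Multiset (ℕ × ℕ)) (hp : InvP p) (hq : InvP q)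
    (hS : ∀ x ∈ S, InvP x) :
    cnt (normalizeBasket ((p.1 + q.1, p.2 + q.2) ::ₘ S)) ≤ cnt (p ::ₘ q ::ₘ S) := by
  rw [normalizeBasket, Multiset.cons_bind,
    show (S.bind fun p => Multiset.replicate (Nat.gcd p.1 p.2)
      (p.1 / Nat.gcd p.1 p.2, p.2 / Nat.gcd p.1 p.2)) = normalizeBasket S from rfl,
    normalize_coprime S fun x hx => (hS x hx).1]
  unfold cnt
  rw [Multiset.count_add, Multiset.count_cons, Multiset.count_cons]
  by_cases hpq : p = (2,5) ∧ q = (2,5)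
  · obtain ⟨hp', hq'⟩ := hpq
    subst hp'; subst hq'
    have hg : Nat.gcd ((2,5).1 + (2,5).1) ((2,5).2 + (2,5).2) = 2 := by decide
    rw [hg]
    norm_num [Multiset.count_replicate]
    omega
  · have hv : 5 * (p.1 + q.1) < 2 * (p.2 + q.2) := by
      rcases Decidable.not_and_iff_or_not.mp hpq with h | h
      · have := strict_of_ne hp h
        have := hq.2.1
        omega
      · have := strict_of_ne hq h
        have := hp.2.1
        omega
    have hrep : Multiset.count ((2,5) : ℕ × ℕ)
        (Multiset.replicate (Nat.gcd (p.1 + q.1) (p.2 + q.2))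
          ((p.1 + q.1) / Nat.gcd (p.1 + q.1) (p.2 + q.2),
           (p.2 + q.2) / Nat.gcd (p.1 + q.1) (p.2 + q.2))) = 0 := by
      rw [Multiset.count_replicate, if_neg]
      intro hcontra
      have hg : 0 < Nat.gcd (p.1 + q.1) (p.2 + q.2) :=
        Nat.gcd_pos_of_pos_right _ (by have := hp.2.2; omega)
      obtain ⟨a, ha⟩ := Nat.gcd_dvd_left (p.1 + q.1) (p.2 + q.2)
      obtain ⟨b, hb⟩ := Nat.gcd_dvd_right (p.1 + q.1) (p.2 + q.2)
      have hda : (p.1 + q.1) / Nat.gcd (p.1 + q.1) (p.2 + q.2) = a :=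
        Nat.div_eq_of_eq_mul_right hg ha
      have hdb : (p.2 + q.2) / Nat.gcd (p.1 + q.1) (p.2 + q.2) = b :=
        Nat.div_eq_of_eq_mul_right hg hb
      have h1 := congrArg Prod.fst hcontra
      have h2 := congrArg Prod.snd hcontra
      simp only [hda, hdb] at h1 h2
      have ha2 : a = 2 := by omega
      have hb5 : b = 5 := by omega
      subst ha2; subst hb5
      omega
    rw [hrep]
    omega


lemma packstep_props {N N' : Multiset (ℕ × ℕ)} (hI : Inv N) (h : PackStep N N') :
    Inv N' ∧ S3 N ≤ S3 N' ∧ cnt N' ≤ cnt N := by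
  obtain ⟨C, ⟨p, q, S, h1, h2⟩, h3⟩ := h
  subst h1; subst h2; subst h3
  have hp : InvP p := hI p (Multiset.mem_cons_self p _)
  have hq : InvP q := hI q (Multiset.mem_cons_of_mem (Multiset.mem_cons_self q _))
  have hS : ∀ x ∈ S, InvP x := fun x hx =>
    hI x (Multiset.mem_cons_of_mem (Multiset.mem_cons_of_mem hx))
  refine ⟨?_, ?_, ?_⟩
  · refine invP_normalize fun y hy => ?_
    rcases Multiset.mem_cons.mp hy with h | h
    · subst h
      constructor
      · have := hp.2.1; have := hq.2.1; simp only; omega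
      · have := hp.2.2; have := hq.2.2; simp only; omega
    · exact ⟨(hS y h).2.1, (hS y h).2.2⟩
  · rw [S3_normalize _ (fun y hy => by
      rcases Multiset.mem_cons.mp hy with h | h
      · subst h; have := hp.2.2; have := hq.2.2; simp only; omega
      · exact (hS y h).2.2)]
    rw [S3_cons, S3_cons, S3_cons]
    have := sval_superadd p.1 p.2 q.1 q.2 hp.2.2 hq.2.2
    simp only at this ⊢
    linarith
  · exact cnt_norm_cons p q S hp hq hS

lemma chain_props {N N' : Multiset (ℕ × ℕ)} (h : Relation.ReflTransGen PackStep N N')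
    (hI : Inv N) : Inv N' ∧ S3 N ≤ S3 N' ∧ cnt N' ≤ cnt N := by
  induction h with
  | refl => exact ⟨hI, le_refl _, le_refl _⟩
  | tail h1 h2 ih =>
    obtain ⟨i1, i2, i3⟩ := ih
    obtain ⟨j1, j2, j3⟩ := packstep_props i1 h2
    exact ⟨j1, i2.trans j2, j3.trans i3⟩

lemma inv_TT : Inv TT := by
  show ∀ x ∈ TT, InvP x
  decide

lemma succs_ok : ∀ M ∈ ([TT, YY, XX] : List (Multiset (ℕ × ℕ))), ∀ N ∈ succs M,
    N = TT ∨ N = YY ∨ N = XX ∨ cnt N ≤ 1 ∨ N = B1 ∨ N = B2 ∨ N = B3 ∨ N = B4 := by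
  decide

lemma cnt_XX : cnt XX = 2 := by decide

lemma S3_XX : S3 XX = 3959/660 := by norm_num [S3, XX]
lemma S3_TT : S3 TT = 359/60 := by norm_num [S3, TT]
lemma S3_YY : S3 YY = 1259/210 := by norm_num [S3, YY]
lemma S3_B1 : (3959/660 : ℚ) < S3 B1 := by norm_num [S3, B1]
lemma S3_B2 : (3959/660 : ℚ) < S3 B2 := by norm_num [S3, B2]
lemma S3_B3 : (3959/660 : ℚ) < S3 B3 := by norm_num [S3, B3]
lemma S3_B4 : (3959/660 : ℚ) < S3 B4 := by norm_num [S3, B4]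

lemma claimA : ∀ N, Relation.ReflTransGen PackStep TT N →
    Relation.ReflTransGen PackStep N XX → N = TT ∨ N = YY ∨ N = XX := by
  intro N h
  induction h with
  | refl => exact fun _ => Or.inl rfl
  | @tail M N' h1 h2 ih =>
    intro hX
    have hMX := ih (Relation.ReflTransGen.head h2 hX)
    have hInvM : Inv M := (chain_props h1 inv_TT).1
    have hInvN : Inv N' := (packstep_props hInvM h2).1
    have hmem : N' ∈ succs M := mem_succs h2
    have hdisj : N' = TT ∨ N' = YY ∨ N' = XX ∨ cnt N' ≤ 1 ∨
        N' = B1 ∨ N' = B2 ∨ N' = B3 ∨ N' = B4 := by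
      rcases hMX with rfl | rfl | rfl
      · exact succs_ok _ (by simp) N' hmem
      · exact succs_ok _ (by simp) N' hmem
      · exact succs_ok _ (by simp) N' hmem
    have hchain := chain_props hX hInvN
    rcases hdisj with rfl | rfl | rfl | hc | rfl | rfl | rfl | rfl
    · exact Or.inl rfl
    · exact Or.inr (Or.inl rfl)
    · exact Or.inr (Or.inr rfl)
    · exfalso
      have := hchain.2.2
      rw [cnt_XX] at this
      omega
    · exfalso; have := hchain.2.1; rw [S3_XX] at this; linarith [S3_B1]
    · exfalso; have := hchain.2.1; rw [S3_XX] at this; linarith [S3_B2]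
    · exfalso; have := hchain.2.1; rw [S3_XX] at this; linarith [S3_B3]
    · exfalso; have := hchain.2.1; rw [S3_XX] at this; linarith [S3_B4]

lemma packstep_TY : PackStep TT YY := by
  refine ⟨((1:ℕ) + 1, (3:ℕ) + 4) ::ₘ {(2,5),(2,5),(1,3),(1,4),(1,4)},
    ⟨((1:ℕ),(3:ℕ)), ((1:ℕ),(4:ℕ)), {(2,5),(2,5),(1,3),(1,4),(1,4)}, by decide, rfl⟩, by decide⟩

end UnpackB83Aux

open UnpackB83Aux in
/-- If `{2×(2,5), 2×(1,3), 3×(1,4)} ≽ B ≽ {2×(2,5),(1,3),(3,11),(1,4)}` and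
`B ≠ {2×(2,5),(1,3),(3,11),(1,4)}` (up to the identification), then
`B ≽ {2×(2,5),(1,3),(2,7),2×(1,4)}`; in particular `K³(B,1,0) ≥ 1/210`. -/
theorem unpack_B83 (B : Multiset (ℕ × ℕ)) (hB : IsBasket B)
    (h1 : Dominates
      (Multiset.replicate 2 (2,5) + Multiset.replicate 2 (1,3) +
        Multiset.replicate 3 (1,4)) B)
    (h2 : Dominates B {(2,5),(2,5),(1,3),(3,11),(1,4)})
    (hne : normalizeBasket B ≠ ({(2,5),(2,5),(1,3),(3,11),(1,4)} : Multiset (ℕ × ℕ))) :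
    Dominates B {(2,5),(2,5),(1,3),(2,7),(1,4),(1,4)} ∧
    (1 / 210 : ℚ) ≤ Kcube B 1 0 := by
  have hTn : normalizeBasket (Multiset.replicate 2 (2,5) + Multiset.replicate 2 (1,3) +
      Multiset.replicate 3 (1,4)) = TT := by decide
  have hXn : normalizeBasket ({(2,5),(2,5),(1,3),(3,11),(1,4)} : Multiset (ℕ × ℕ)) = XX := by
    decide
  have hYn : normalizeBasket ({(2,5),(2,5),(1,3),(2,7),(1,4),(1,4)} : Multiset (ℕ × ℕ)) = YY := by
    decide
  have h1' : Relation.ReflTransGen PackStep TT (normalizeBasket B) := by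
    have := h1; rw [Dominates, hTn] at this; exact this
  have h2' : Relation.ReflTransGen PackStep (normalizeBasket B) XX := by
    have := h2; rw [Dominates, hXn] at this; exact this
  have hset := claimA _ h1' h2'
  have hmem : normalizeBasket B = TT ∨ normalizeBasket B = YY := by
    rcases hset with h | h | h
    · exact Or.inl h
    · exact Or.inr h
    · exact absurd h hne
  constructor
  · rw [Dominates, hYn]
    rcases hmem with h | h
    · rw [h]; exact Relation.ReflTransGen.single packstep_TY
    · rw [h]
  · have hBpos : ∀ p ∈ B, 0 < p.2 := fun p hp => by have := hB p hp; omega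
    have hSB : S3 B = S3 (normalizeBasket B) := (S3_normalize B hBpos).symm
    have hK : Kcube B 1 0 = 6 - S3 B := by
      rw [Kcube]; push_cast; rw [show ((B.map fun p => (p.1 : ℚ) * ((p.2 : ℚ) - (p.1 : ℚ))
        / (p.2 : ℚ)).sum) = S3 B from rfl]; ring
    rw [hK, hSB]
    rcases hmem with h | h <;> rw [h]
    · rw [S3_TT]; norm_num
    · rw [S3_YY]; norm_num
end
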